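/- With r defined by r(1) = 2 and r(d) = 1 + min_{λ ⊢ d, |λ| ≥ 2} ∑_{j=1}^{d-1} m_j(λ)·r(j) for d > 1, one has r(d) = 2d + 1 for all d > 1. -/

import Mathlib

/-- `partitionSum r P` is `r(λ) = ∑_{j=1}^{d-1} m_j(λ) · r(j)` for a partition `P` of `d`. -/
def partitionSum (r : ℕ → ℕ) {d : ℕ} (P : Nat.Partition d) : ℕ :=
  ∑ j ∈ Finset.Icc 1 (d - 1), P.parts.count j * r j

lemma part_lt {d : ℕ} (P : Nat.Partition d) (hc : 2 ≤ Multiset.card P.parts) {a : ℕ}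
    (ha : a ∈ P.parts) : a < d := by
  obtain ⟨t, ht⟩ := Multiset.exists_cons_of_mem ha
  have hsum : a + t.sum = d := by rw [← P.parts_sum, ht, Multiset.sum_cons]
  have htcard : 1 ≤ Multiset.card t := by
    have h2 := hc; rw [ht] at h2; simpa using h2
  obtain ⟨b, hb⟩ := Multiset.card_pos_iff_exists_mem.mp htcard
  obtain ⟨u, hu⟩ := Multiset.exists_cons_of_mem hb
  have hbpos : 0 < b := P.parts_pos (by rw [ht]; exact Multiset.mem_cons_of_mem hb)
  have : t.sum = b + u.sum := by rw [hu, Multiset.sum_cons]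
  omega

lemma partitionSum_eq {d : ℕ} (r : ℕ → ℕ) (P : Nat.Partition d) (hc : 2 ≤ Multiset.card P.parts) :
    partitionSum r P = (P.parts.map r).sum := by
  rw [partitionSum, Finset.sum_multiset_map_count]
  refine (Finset.sum_subset ?_ ?_).symm
  · intro x hx
    simp only [Multiset.mem_toFinset] at hx
    have := P.parts_pos hx
    have := part_lt P hc hx
    simp only [Finset.mem_Icc]; omega
  · intro x _ hx
    simp only [Multiset.mem_toFinset] at hx
    simp [Multiset.count_eq_zero_of_notMem hx]


theorem stmt_6 (r : ℕ → ℕ) (h1 : r 1 = 2)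
    (hrec : ∀ d, 1 < d →
      r d = 1 + sInf {s | ∃ P : Nat.Partition d, 2 ≤ P.parts.card ∧ s = partitionSum r P})
    (d : ℕ) (hd : 1 < d) :
    r d = 2 * d + 1 := by
  induction d using Nat.strong_induction_on with
  | _ d IH =>
  rw [hrec d hd]
  set Pones : Nat.Partition d := ⟨Multiset.replicate d 1,
    fun {i} hi => by simp [Multiset.eq_of_mem_replicate hi], by simp⟩ with hP
  have hcard : 2 ≤ Multiset.card Pones.parts := by
    simp only [hP, Multiset.card_replicate]; omega
  have hval : partitionSum r Pones = 2 * d := by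
    rw [partitionSum_eq r Pones hcard]
    simp only [hP, Multiset.map_replicate, Multiset.sum_replicate, smul_eq_mul, h1]
    ring
  have hmemones : (2 * d) ∈ {s | ∃ P : Nat.Partition d, 2 ≤ Multiset.card P.parts ∧ s = partitionSum r P} :=
    ⟨Pones, hcard, hval.symm⟩
  have hlb : ∀ s ∈ {s | ∃ P : Nat.Partition d, 2 ≤ Multiset.card P.parts ∧ s = partitionSum r P},
      2 * d ≤ s := by
    rintro s ⟨P, hc, rfl⟩
    rw [partitionSum_eq r P hc]
    have hle : ((P.parts.map (fun i => 2 * i)).sum : ℕ) ≤ (P.parts.map r).sum := by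
      apply Multiset.sum_map_le_sum_map
      intro i hi
      have hipos := P.parts_pos hi
      rcases eq_or_lt_of_le (show 1 ≤ i from hipos) with h | h
      · simp [← h, h1]
      · have := IH i (part_lt P hc hi) h
        omega
    calc 2 * d = (P.parts.map (fun i => 2 * i)).sum := by
          rw [Multiset.sum_map_mul_left]; simp [P.parts_sum]
      _ ≤ _ := hle
  have hinf : sInf {s | ∃ P : Nat.Partition d, 2 ≤ Multiset.card P.parts ∧ s = partitionSum r P} = 2 * d :=
    le_antisymm (Nat.sInf_le hmemones) (hlb _ (Nat.sInf_mem ⟨_, hmemones⟩))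
  rw [hinf]; ring
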